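/- Let G be a tree in which every vertex has degree 3, let s and t be adjacent vertices of G, and let α, β ∈ ℂ with α ≠ β. Then the group of graph automorphisms of G that fix both s and t acts simply transitively (freely and transitively) on the set of ℂ-valued holomorphic functions φ on G with φ(s) = α and φ(t) = β, via φ ↦ φ ∘ g. In particular this set of holomorphic functions is nonempty and in bijection with the automorphism group fixing s and t. -/

import Mathlib

/-- The Laplacian-based notion of a harmonic function on a locally finite simple graph. -/
def SimpleGraph.IsHarmonic {V R : Type*} [CommRing R] (G : SimpleGraph V)
    [G.LocallyFinite] (f : V → R) : Prop :=
  ∀ x : V, ∑ y ∈ G.neighborFinset x, (f y - f x) = 0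

/-- A function is holomorphic if both it and its square are harmonic. -/
def SimpleGraph.IsHolomorphic {V R : Type*} [CommRing R] (G : SimpleGraph V)
    [G.LocallyFinite] (f : V → R) : Prop :=
  G.IsHarmonic f ∧ G.IsHarmonic (fun x => (f x) ^ 2)

namespace Stmt12

open SimpleGraph Walk

variable {V : Type*} {G : SimpleGraph V}

open scoped Classical

lemma path_unique (ht : G.IsTree) {u v : V} {p q : G.Walk u v} (hp : p.IsPath) (hq : q.IsPath) :
    p = q := by
  obtain ⟨r, -, hr⟩ := ht.existsUnique_path u v
  rw [hr p hp, hr q hq]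

lemma path_length (ht : G.IsTree) {u v : V} {p : G.Walk u v} (hp : p.IsPath) :
    p.length = G.dist u v := by
  obtain ⟨q, hq, hl⟩ := ht.isConnected.exists_path_of_dist u v
  rw [path_unique ht hp hq, hl]

/-- In a tree, a vertex at positive distance from `s` has a neighbor strictly closer to `s`. -/
lemma exists_parent (ht : G.IsTree) {s v : V} (hv : v ≠ s) :
    ∃ p : V, G.Adj p v ∧ G.dist s p + 1 = G.dist s v := by
  obtain ⟨w, hw, hl⟩ := ht.isConnected.exists_path_of_dist s v
  have hd : 0 < G.dist s v := ht.isConnected.pos_dist_of_ne (Ne.symm hv)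
  cases hr : w.reverse with
  | nil =>
      exfalso
      have : w.length = 0 := by
        have := congrArg Walk.length hr
        simpa using this
      omega
  | @cons _ p _ hadj q =>
      refine ⟨p, hadj.symm, ?_⟩
      have h1 : G.dist s p ≤ q.length := by
        have := SimpleGraph.dist_le q.reverse
        simpa using this
      have h2 : G.dist s v ≤ G.dist s p + 1 := by
        have h3 := SimpleGraph.dist_le ((ht.isConnected.exists_path_of_dist s p).choose.concat hadj.symm)
        rw [Walk.length_concat] at h3
        have h4 := (ht.isConnected.exists_path_of_dist s p).choose_spec.2
        omega
      have h5 : q.length + 1 = G.dist s v := by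
        have := congrArg Walk.length hr
        simp at this
        omega
      omega

/-- In a tree, the neighbor strictly closer to `s` is unique. -/
lemma parent_unique (ht : G.IsTree) {s v p p' : V} (h : G.Adj p v) (h' : G.Adj p' v)
    (hd : G.dist s p < G.dist s v) (hd' : G.dist s p' < G.dist s v) : p = p' := by
  classical
  have key : ∀ {x : V}, G.Adj x v → G.dist s x < G.dist s v →
      ∃ (w : G.Walk s v), w.IsPath ∧ w.length = G.dist s x + 1 ∧
        w.getVert (G.dist s x) = x := by
    intro x hx hdx
    obtain ⟨wx, hwx, hlx⟩ := ht.isConnected.exists_path_of_dist s x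
    have hvnot : v ∉ wx.support := by
      intro hmem
      have h1 : G.dist s v ≤ (wx.takeUntil v hmem).length :=
        SimpleGraph.dist_le _
      have h2 := Walk.length_takeUntil_le wx hmem
      omega
    refine ⟨wx.concat hx, ?_, ?_, ?_⟩
    · rw [Walk.isPath_def, Walk.support_concat]
      rw [List.nodup_append]
      exact ⟨hwx.support_nodup, List.nodup_singleton v, by
        intro a ha b hb
        simp at hb
        subst hb
        exact fun h => hvnot (h ▸ ha)⟩
    · rw [Walk.length_concat, hlx]
    · rw [Walk.concat_eq_append, Walk.getVert_append]
      rw [hlx]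
      simp
  obtain ⟨w1, hw1, hl1, hg1⟩ := key h hd
  obtain ⟨w2, hw2, hl2, hg2⟩ := key h' hd'
  have hw : w1 = w2 := path_unique ht hw1 hw2
  have : G.dist s p = G.dist s p' := by
    have e1 := path_length ht hw1
    have e2 := path_length ht hw2
    omega
  rw [← hg1, ← hg2, hw, this]

/-- Adjacent vertices in a tree have distances to `s` differing by exactly one. -/
lemma adj_dist (ht : G.IsTree) {s u v : V} (h : G.Adj u v) :
    G.dist s u + 1 = G.dist s v ∨ G.dist s v + 1 = G.dist s u := by
  classical
  have htri1 : G.dist s v ≤ G.dist s u + 1 := by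
    have := ht.isConnected.dist_triangle (u := s) (v := u) (w := v)
    rw [SimpleGraph.dist_eq_one_iff_adj.mpr h] at this
    omega
  have htri2 : G.dist s u ≤ G.dist s v + 1 := by
    have := ht.isConnected.dist_triangle (u := s) (v := v) (w := u)
    rw [SimpleGraph.dist_eq_one_iff_adj.mpr h.symm] at this
    omega
  rcases Nat.lt_trichotomy (G.dist s u) (G.dist s v) with hlt | heq | hgt
  · left; omega
  · exfalso
    -- equal distances for adjacent vertices: contradiction in a tree
    have hne : u ≠ v := h.ne
    have hd0 : 0 < G.dist s u := by
      rcases Nat.eq_zero_or_pos (G.dist s u) with h0 | h0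
      · have hu : s = u := (ht.isConnected.dist_eq_zero_iff).mp h0
        have hv : s = v := (ht.isConnected.dist_eq_zero_iff).mp (by omega)
        exact absurd (hu.symm.trans hv) hne
      · exact h0
    obtain ⟨wu, hwu, hlu⟩ := ht.isConnected.exists_path_of_dist s u
    have hvnot : v ∉ wu.support := by
      intro hmem
      have h1 : G.dist s v ≤ (wu.takeUntil v hmem).length := SimpleGraph.dist_le _
      have h2 : (wu.takeUntil v hmem).length ≤ wu.length := Walk.length_takeUntil_le wu hmem
      -- then dropUntil from v to u is a walk of positive length
      have h3 : (wu.takeUntil v hmem).length + (wu.dropUntil v hmem).length = wu.length := by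
        have := congrArg Walk.length (Walk.take_spec wu hmem)
        rw [Walk.length_append] at this
        omega
      have h4 : 0 < (wu.dropUntil v hmem).length := by
        rcases Nat.eq_zero_or_pos (wu.dropUntil v hmem).length with h5 | h5
        · exfalso
          have := (wu.dropUntil v hmem).eq_of_length_eq_zero h5
          exact hne this.symm
        · exact h5
      omega
    have hpath : (wu.concat h).IsPath := by
      rw [Walk.isPath_def, Walk.support_concat, List.nodup_append]
      exact ⟨hwu.support_nodup, List.nodup_singleton v, by
        intro a ha b hb
        simp at hb
        subst hb
        exact fun h => hvnot (h ▸ ha)⟩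
    have := path_length ht hpath
    rw [Walk.length_concat, hlu] at this
    omega
  · right; omega


variable (G) in
/-- The parent of `v` in the tree rooted at `s` (junk value `v` for `v = s`). -/
noncomputable def par (ht : G.IsTree) (s v : V) : V :=
  if h : v = s then v else (exists_parent ht h).choose

lemma par_adj (ht : G.IsTree) {s v : V} (h : v ≠ s) : G.Adj (par G ht s v) v := by
  rw [par, dif_neg h]; exact (exists_parent ht h).choose_spec.1

lemma par_dist (ht : G.IsTree) {s v : V} (h : v ≠ s) :
    G.dist s (par G ht s v) + 1 = G.dist s v := by
  rw [par, dif_neg h]; exact (exists_parent ht h).choose_spec.2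

lemma dist_pos (ht : G.IsTree) {s v : V} (h : v ≠ s) : 0 < G.dist s v :=
  ht.isConnected.pos_dist_of_ne (Ne.symm h)

lemma eq_s_of_dist_eq_zero (ht : G.IsTree) {s v : V} (h : G.dist s v = 0) : v = s :=
  (ht.isConnected.dist_eq_zero_iff.mp h).symm

lemma par_eq (ht : G.IsTree) {s u v : V} (h : G.Adj u v) (hd : G.dist s u < G.dist s v) :
    par G ht s v = u := by
  have hv : v ≠ s := by
    rintro rfl
    rw [SimpleGraph.dist_self] at hd
    omega
  exact parent_unique ht (par_adj ht hv) h (by have := par_dist ht hv; omega) hd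

variable (G) in
/-- The "upward" vertex from `v`: the parent of `v`, except `t` when `v = s`. -/
noncomputable def pq (ht : G.IsTree) (s t v : V) : V :=
  if v = s then t else par G ht s v

lemma pq_s (ht : G.IsTree) (s t : V) : pq G ht s t s = t := by rw [pq, if_pos rfl]

lemma pq_of_ne (ht : G.IsTree) {s v : V} (t : V) (h : v ≠ s) :
    pq G ht s t v = par G ht s v := by rw [pq, if_neg h]

lemma pq_adj (ht : G.IsTree) {s t : V} (hst : G.Adj s t) (v : V) :
    G.Adj (pq G ht s t v) v := by
  rw [pq]
  split
  · next h => subst h; exact hst.symm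
  · next h => exact par_adj ht h

lemma par_t (ht : G.IsTree) {s t : V} (hst : G.Adj s t) : par G ht s t = s := by
  refine par_eq ht hst ?_
  have h1 : G.dist s t = 1 := SimpleGraph.dist_eq_one_iff_adj.mpr hst
  have h0 : G.dist s s = 0 := SimpleGraph.dist_self
  omega

/-- Facts about a "child" `c` of `x`, i.e. a neighbor other than `pq x`. -/
lemma child_facts [G.LocallyFinite] (ht : G.IsTree) {s t x c : V} (hst : G.Adj s t)
    (hc : c ∈ (G.neighborFinset x).erase (pq G ht s t x)) :
    par G ht s c = x ∧ G.dist s c = G.dist s x + 1 ∧ c ≠ s ∧ c ≠ t := by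
  rw [Finset.mem_erase, mem_neighborFinset] at hc
  obtain ⟨hne, hadj⟩ := hc
  by_cases hx : x = s
  · subst hx
    rw [pq_s] at hne
    have h1 : G.dist x c = 1 := SimpleGraph.dist_eq_one_iff_adj.mpr hadj
    have h0 : G.dist x x = 0 := SimpleGraph.dist_self
    refine ⟨par_eq ht hadj (by omega), by omega, hadj.ne', hne⟩
  · rw [pq_of_ne ht t hx] at hne
    rcases adj_dist ht (s := s) hadj with hd | hd
    · have hpc : par G ht s c = x := par_eq ht hadj (by omega)
      have hcs : c ≠ s := by
        rintro rfl
        simp [SimpleGraph.dist_self] at hd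
      refine ⟨hpc, by omega, hcs, ?_⟩
      intro h; subst h
      rw [par_t ht hst] at hpc
      exact hx hpc.symm
    · exfalso
      exact hne (par_eq ht hadj.symm (by omega)).symm

lemma mem_children [G.LocallyFinite] (ht : G.IsTree) {s t x : V} (hst : G.Adj s t) (hx : x ≠ s) (hxt : x ≠ t) :
    x ∈ (G.neighborFinset (par G ht s x)).erase (pq G ht s t (par G ht s x)) := by
  rw [Finset.mem_erase, mem_neighborFinset]
  refine ⟨?_, (par_adj ht hx).symm.symm⟩
  by_cases hp : par G ht s x = s
  · rw [hp, pq_s]; exact hxt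
  · rw [pq_of_ne ht t hp]
    intro h
    have h1 := par_dist ht hx
    have h2 := par_dist ht hp
    rw [← h] at h2
    omega

lemma pq_not_mem_children [G.LocallyFinite] (ht : G.IsTree) (s t x : V) :
    pq G ht s t x ∉ (G.neighborFinset x).erase (pq G ht s t x) := Finset.notMem_erase _ _

lemma children_card (ht : G.IsTree) [G.LocallyFinite] {s t x : V} (hst : G.Adj s t)
    (hdeg : ∀ v : V, G.degree v = 3) :
    ((G.neighborFinset x).erase (pq G ht s t x)).card = 2 := by
  have hmem : pq G ht s t x ∈ G.neighborFinset x := by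
    rw [mem_neighborFinset]; exact (pq_adj ht hst x).symm
  rw [Finset.card_erase_of_mem hmem]
  have : (G.neighborFinset x).card = 3 := hdeg x
  omega

/-- Choice of a distinguished element from a finset. -/
noncomputable def pick (s : V) (σ : Finset V) : V :=
  if h : σ.Nonempty then h.choose else s

lemma pick_mem {σ : Finset V} (h : σ.Nonempty) (s : V) : pick s σ ∈ σ := by
  rw [pick, dif_pos h]; exact h.choose_spec

lemma children_pair (ht : G.IsTree) [G.LocallyFinite] {s t x : V} (hst : G.Adj s t)
    (hdeg : ∀ v : V, G.degree v = 3) :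
    ∃ b : V, pick s ((G.neighborFinset x).erase (pq G ht s t x)) ≠ b ∧
      (G.neighborFinset x).erase (pq G ht s t x) =
        {pick s ((G.neighborFinset x).erase (pq G ht s t x)), b} := by
  classical
  set σ := (G.neighborFinset x).erase (pq G ht s t x) with hσ
  have hcard : σ.card = 2 := children_card ht hst hdeg
  have hne : σ.Nonempty := Finset.card_pos.mp (by omega)
  set a := pick s σ with ha
  have hamem : a ∈ σ := pick_mem hne s
  have hcard' : (σ.erase a).card = 1 := by
    rw [Finset.card_erase_of_mem hamem]; omega
  obtain ⟨b, hb⟩ := Finset.card_eq_one.mp hcard'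
  have hbmem : b ∈ σ.erase a := hb ▸ Finset.mem_singleton_self b
  have hab : a ≠ b := (Finset.ne_of_mem_erase hbmem).symm
  refine ⟨b, hab, ?_⟩
  refine (Finset.eq_of_subset_of_card_le ?_ ?_).symm
  · intro c hc
    rcases Finset.mem_insert.mp hc with h | h
    · exact h ▸ hamem
    · rw [Finset.mem_singleton] at h
      exact h ▸ Finset.mem_of_mem_erase hbmem
  · rw [hcard, Finset.card_insert_of_notMem (by simp [hab]), Finset.card_singleton]

/-! ### The primitive cube root of unity -/

noncomputable def ω : ℂ := (-1 + Real.sqrt 3 * Complex.I) / 2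

lemma omega_quad : ω ^ 2 + ω + 1 = 0 := by
  have h3 : (Real.sqrt 3 : ℂ) ^ 2 = 3 := by
    rw [← Complex.ofReal_pow]
    norm_cast
    rw [Real.sq_sqrt]; norm_num
  rw [ω]
  linear_combination (Complex.I ^ 2 / 4) * h3 + (3 / 4) * Complex.I_sq

lemma omega_ne_zero : ω ≠ 0 := by
  intro h
  have := omega_quad
  rw [h] at this
  norm_num at this

lemma omega_ne_one : ω ≠ 1 := by
  intro h
  have := omega_quad
  rw [h] at this
  norm_num at this

lemma omega_sq_ne_one : ω ^ 2 ≠ 1 := by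
  intro h
  have hq := omega_quad
  rw [h] at hq
  have hω : ω = -2 := by linear_combination hq
  have := omega_quad
  rw [hω] at this
  norm_num at this

lemma omega_ne_sq : ω ≠ ω ^ 2 := by
  intro h
  have h1 : ω * (ω - 1) = 0 := by linear_combination -h
  rcases mul_eq_zero.mp h1 with h2 | h2
  · exact omega_ne_zero h2
  · exact omega_ne_one (by linear_combination h2)

/-! ### Construction of a holomorphic function -/

variable (G) in
noncomputable def phi [G.LocallyFinite] (ht : G.IsTree) (s t : V) (α β : ℂ) : V → ℂ :=
  fun v =>
    if hv : v = s then α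
    else if hvt : v = t then β
    else
      (phi ht s t α β (par G ht s v)) +
        (if v = pick s ((G.neighborFinset (par G ht s v)).erase
            (pq G ht s t (par G ht s v))) then -ω else -ω ^ 2) *
          (if hp : par G ht s v = s then α - β
           else phi ht s t α β (par G ht s v) - phi ht s t α β (par G ht s (par G ht s v)))
termination_by v => G.dist s v
decreasing_by
  all_goals simp_wf
  all_goals first
    | (have h1 := par_dist ht hv
       have h2 := par_dist ht hp
       omega)
    | (have := par_dist ht hv
       omega)

lemma phi_s [G.LocallyFinite] (ht : G.IsTree) (s t : V) (α β : ℂ) :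
    phi G ht s t α β s = α := by
  rw [phi.eq_def]; simp

lemma phi_t [G.LocallyFinite] (ht : G.IsTree) {s t : V} (hts : t ≠ s) (α β : ℂ) :
    phi G ht s t α β t = β := by
  rw [phi.eq_def]; simp [hts]

lemma phi_step [G.LocallyFinite] (ht : G.IsTree) {s t v : V} (hst : G.Adj s t)
    (α β : ℂ) (hv : v ≠ s) (hvt : v ≠ t) :
    phi G ht s t α β v = phi G ht s t α β (par G ht s v) +
      (if v = pick s ((G.neighborFinset (par G ht s v)).erase
          (pq G ht s t (par G ht s v))) then -ω else -ω ^ 2) *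
        (phi G ht s t α β (par G ht s v) -
          phi G ht s t α β (pq G ht s t (par G ht s v))) := by
  conv_lhs => rw [phi.eq_def]
  rw [dif_neg hv, dif_neg hvt]
  congr 1
  congr 1
  by_cases hp : par G ht s v = s
  · rw [dif_pos hp, hp, pq_s, phi_s, phi_t ht hst.ne']
  · rw [dif_neg hp, pq_of_ne ht t hp]

lemma sum3 {x q a b : V} [G.LocallyFinite] (f : V → ℂ)
    (hx : G.neighborFinset x = insert q {a, b}) (hq : q ∉ ({a, b} : Finset V)) (hab : a ≠ b) :
    ∑ y ∈ G.neighborFinset x, f y = f q + f a + f b := by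
  rw [hx, Finset.sum_insert hq, Finset.sum_insert (by simp [hab]), Finset.sum_singleton]
  ring

lemma nbhd_eq [G.LocallyFinite] (ht : G.IsTree) {s t : V} (hst : G.Adj s t)
    (hdeg : ∀ v : V, G.degree v = 3) (x : V) :
    ∃ b : V, pick s ((G.neighborFinset x).erase (pq G ht s t x)) ≠ b ∧
      pq G ht s t x ∉ ({pick s ((G.neighborFinset x).erase (pq G ht s t x)), b} : Finset V) ∧
      (G.neighborFinset x).erase (pq G ht s t x) =
        {pick s ((G.neighborFinset x).erase (pq G ht s t x)), b} ∧
      G.neighborFinset x = insert (pq G ht s t x)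
        {pick s ((G.neighborFinset x).erase (pq G ht s t x)), b} := by
  obtain ⟨b, hab, heq⟩ := children_pair ht hst hdeg (x := x)
  have hqmem : pq G ht s t x ∈ G.neighborFinset x := by
    rw [mem_neighborFinset]; exact (pq_adj ht hst x).symm
  refine ⟨b, hab, ?_, heq, ?_⟩
  · rw [← heq]; exact Finset.notMem_erase _ _
  · rw [← heq, Finset.insert_erase hqmem]

lemma phi_child_eq [G.LocallyFinite] (ht : G.IsTree) {s t x c : V} (hst : G.Adj s t)
    (α β : ℂ) (hc : c ∈ (G.neighborFinset x).erase (pq G ht s t x)) :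
    phi G ht s t α β c = phi G ht s t α β x +
      (if c = pick s ((G.neighborFinset x).erase (pq G ht s t x)) then -ω else -ω ^ 2) *
        (phi G ht s t α β x - phi G ht s t α β (pq G ht s t x)) := by
  obtain ⟨hpar, _, hcs, hct⟩ := child_facts ht hst hc
  have := phi_step ht hst α β hcs hct
  rw [hpar] at this
  exact this

lemma phi_isHolomorphic [G.LocallyFinite] (ht : G.IsTree) {s t : V} (hst : G.Adj s t)
    (hdeg : ∀ v : V, G.degree v = 3) (α β : ℂ) :
    G.IsHolomorphic (phi G ht s t α β) := by
  classical
  constructor <;> intro x <;>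
  · obtain ⟨b, hab, hqab, heq, hNx⟩ := nbhd_eq ht hst hdeg x
    set q := pq G ht s t x with hq
    set a := pick s ((G.neighborFinset x).erase q) with ha
    have hea : phi G ht s t α β a = phi G ht s t α β x +
        (-ω) * (phi G ht s t α β x - phi G ht s t α β q) := by
      have := phi_child_eq ht hst α β (c := a) (x := x) (by rw [heq]; simp)
      rw [if_pos rfl] at this
      exact this
    have heb : phi G ht s t α β b = phi G ht s t α β x +
        (-ω ^ 2) * (phi G ht s t α β x - phi G ht s t α β q) := by
      have := phi_child_eq ht hst α β (c := b) (x := x) (by rw [heq]; simp)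
      rw [if_neg (by exact fun h => hab h.symm)] at this
      exact this
    · rw [sum3 _ hNx hqab hab]
      beta_reduce
      rw [hea, heb]
      set u := phi G ht s t α β x
      set w := phi G ht s t α β q
      first
      | linear_combination (w - u) * omega_quad
      | linear_combination (-2 * u * (u - w) + (u - w) ^ 2 * (ω ^ 2 - ω + 1)) * omega_quad

/-! ### Structure of arbitrary holomorphic functions -/

lemma holo_local [G.LocallyFinite] {f : V → ℂ} (hf : G.IsHolomorphic f)
    {x q a b : V} (hab : a ≠ b) (hqab : q ∉ ({a, b} : Finset V))
    (hNx : G.neighborFinset x = insert q {a, b}) :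
    (f a = f x - ω * (f x - f q) ∧ f b = f x - ω ^ 2 * (f x - f q)) ∨
    (f a = f x - ω ^ 2 * (f x - f q) ∧ f b = f x - ω * (f x - f q)) := by
  have e1 : (f q - f x) + ((f a - f x) + (f b - f x)) = 0 := by
    have := hf.1 x
    rw [sum3 _ hNx hqab hab] at this
    linear_combination this
  have e2 : (f q ^ 2 - f x ^ 2) + ((f a ^ 2 - f x ^ 2) + (f b ^ 2 - f x ^ 2)) = 0 := by
    have := hf.2 x
    rw [sum3 _ hNx hqab hab] at this
    beta_reduce at this
    linear_combination this
  have key : (f a - f x + ω * (f x - f q)) * (f a - f x + ω ^ 2 * (f x - f q)) = 0 := by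
    linear_combination (1/2 : ℂ) * e2 + ((f q + f a - f b - f x) / 2 - f x) * e1 +
      ((f x - f q) * (f a - f x) + (ω - 1) * (f x - f q) ^ 2) * omega_quad
  rcases mul_eq_zero.mp key with h | h
  · left
    have hA : f a = f x - ω * (f x - f q) := by linear_combination h
    refine ⟨hA, ?_⟩
    linear_combination e1 - hA + (f x - f q) * omega_quad
  · right
    have hA : f a = f x - ω ^ 2 * (f x - f q) := by linear_combination h
    refine ⟨hA, ?_⟩
    linear_combination e1 - hA + (f x - f q) * omega_quad

lemma holo_struct [G.LocallyFinite] (ht : G.IsTree) {s t : V} (hst : G.Adj s t)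
    (hdeg : ∀ v : V, G.degree v = 3) {f : V → ℂ} (hf : G.IsHolomorphic f) (x : V) :
    ∃ a b : V, a ≠ b ∧ pq G ht s t x ∉ ({a, b} : Finset V) ∧
      (G.neighborFinset x).erase (pq G ht s t x) = {a, b} ∧
      G.neighborFinset x = insert (pq G ht s t x) {a, b} ∧
      f a = f x - ω * (f x - f (pq G ht s t x)) ∧
      f b = f x - ω ^ 2 * (f x - f (pq G ht s t x)) := by
  obtain ⟨b, hab, hqab, heq, hNx⟩ := nbhd_eq ht hst hdeg x
  set a := pick s ((G.neighborFinset x).erase (pq G ht s t x))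
  rcases holo_local hf hab hqab hNx with ⟨h1, h2⟩ | ⟨h1, h2⟩
  · exact ⟨a, b, hab, hqab, heq, hNx, h1, h2⟩
  · refine ⟨b, a, hab.symm, ?_, ?_, ?_, h2, h1⟩
    · rwa [Finset.pair_comm]
    · rwa [Finset.pair_comm]
    · rwa [Finset.pair_comm]

/-- For a holomorphic function with distinct values on the base edge, all "edge
differences" towards the root are nonzero. -/
lemma holo_delta_ne [G.LocallyFinite] (ht : G.IsTree) {s t : V} (hst : G.Adj s t)
    (hdeg : ∀ v : V, G.degree v = 3) {f : V → ℂ} (hf : G.IsHolomorphic f)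
    (hne : f s ≠ f t) : ∀ v : V, f v ≠ f (pq G ht s t v) := by
  have main : ∀ (n : ℕ) (v : V), G.dist s v ≤ n → f v ≠ f (pq G ht s t v) := by
    intro n
    induction n with
    | zero =>
        intro v hv
        have hvs : v = s := eq_s_of_dist_eq_zero ht (by omega)
        subst hvs
        rw [pq_s]
        exact hne
    | succ n IH =>
        intro v hv
        by_cases hvs : v = s
        · subst hvs; rw [pq_s]; exact hne
        by_cases hvt : v = t
        · subst hvt
          rw [pq_of_ne ht _ hvs, par_t ht hst]
          exact fun h => hne h.symm
        · have hp := par_dist ht hvs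
          have hIH : f (par G ht s v) ≠ f (pq G ht s t (par G ht s v)) := by
            apply IH
            omega
          obtain ⟨a, b, hab, hqab, heq, hNx, hfa, hfb⟩ :=
            holo_struct ht hst hdeg hf (par G ht s v)
          have hvmem : v ∈ ({a, b} : Finset V) := by
            rw [← heq]
            exact mem_children ht hst hvs hvt
          have hδ : f (par G ht s v) - f (pq G ht s t (par G ht s v)) ≠ 0 :=
            sub_ne_zero_of_ne hIH
          rw [pq_of_ne ht _ hvs]
          rcases Finset.mem_insert.mp hvmem with h | h
          · subst h
            rw [hfa]
            intro hcon
            apply mul_ne_zero omega_ne_zero hδ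
            linear_combination -hcon
          · rw [Finset.mem_singleton] at h
            subst h
            rw [hfb]
            intro hcon
            apply mul_ne_zero (pow_ne_zero 2 omega_ne_zero) hδ
            linear_combination -hcon
  exact fun v => main (G.dist s v) v le_rfl

/-- A holomorphic function with nonzero local differences is injective on
neighborhoods. -/
lemma holo_inj [G.LocallyFinite] (ht : G.IsTree) {s t : V} (hst : G.Adj s t)
    (hdeg : ∀ v : V, G.degree v = 3) {f : V → ℂ} (hf : G.IsHolomorphic f)
    (hne : f s ≠ f t) {x c c' : V} (hc : c ∈ G.neighborFinset x)
    (hc' : c' ∈ G.neighborFinset x) (hfcc : f c = f c') : c = c' := by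
  obtain ⟨a, b, hab, hqab, heq, hNx, hfa, hfb⟩ := holo_struct ht hst hdeg hf x
  set q := pq G ht s t x with hq
  have hδ : f x - f q ≠ 0 := sub_ne_zero_of_ne (holo_delta_ne ht hst hdeg hf hne x)
  have huniq : ∀ μ₁ μ₂ : ℂ, μ₁ ≠ μ₂ →
      f x - μ₁ * (f x - f q) ≠ f x - μ₂ * (f x - f q) := by
    intro μ₁ μ₂ h12 hcon
    apply h12
    have h0 : (μ₁ - μ₂) * (f x - f q) = 0 := by linear_combination -hcon
    rcases mul_eq_zero.mp h0 with h | h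
    · linear_combination h
    · exact absurd h hδ
  have hfq : f q = f x - 1 * (f x - f q) := by ring
  have hne1ω : (1 : ℂ) ≠ ω := fun h => omega_ne_one h.symm
  have hne1ω2 : (1 : ℂ) ≠ ω ^ 2 := fun h => omega_sq_ne_one h.symm
  have hneωω2 : ω ≠ ω ^ 2 := omega_ne_sq
  rw [hNx, Finset.mem_insert, Finset.mem_insert, Finset.mem_singleton] at hc hc'
  rcases hc with rfl | rfl | rfl <;> rcases hc' with rfl | rfl | rfl <;>
    first
    | rfl
    | (exfalso
       first
       | exact huniq 1 ω hne1ω (by rw [← hfq, ← hfa]; first | exact hfcc | exact hfcc.symm)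
       | exact huniq 1 (ω ^ 2) hne1ω2 (by rw [← hfq, ← hfb]; first | exact hfcc | exact hfcc.symm)
       | exact huniq ω 1 hne1ω.symm (by rw [← hfq, ← hfa]; first | exact hfcc | exact hfcc.symm)
       | exact huniq ω (ω ^ 2) hneωω2 (by rw [← hfa, ← hfb]; first | exact hfcc | exact hfcc.symm)
       | exact huniq (ω ^ 2) 1 hne1ω2.symm (by rw [← hfq, ← hfb]; first | exact hfcc | exact hfcc.symm)
       | exact huniq (ω ^ 2) ω hneωω2.symm (by rw [← hfa, ← hfb]; first | exact hfcc | exact hfcc.symm))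

/-! ### Construction of the automorphism matching two holomorphic functions -/

variable (G) in
noncomputable def gmap (ht : G.IsTree) (s t : V) (φ ψ : V → ℂ) : V → V :=
  fun v =>
    if hv : v = s then s
    else if v = t then t
    else
      haveI : Nonempty V := ⟨s⟩
      Classical.epsilon (fun c =>
        par G ht s c = gmap ht s t φ ψ (par G ht s v) ∧
        G.dist s c = G.dist s (par G ht s v) + 1 ∧ φ c = ψ v)
termination_by v => G.dist s v
decreasing_by have := par_dist ht hv; omega

lemma gmap_s (ht : G.IsTree) (s t : V) (φ ψ : V → ℂ) : gmap G ht s t φ ψ s = s := by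
  rw [gmap.eq_def]; simp

lemma gmap_t (ht : G.IsTree) {s t : V} (hts : t ≠ s) (φ ψ : V → ℂ) :
    gmap G ht s t φ ψ t = t := by
  rw [gmap.eq_def]; simp [hts]

lemma gmap_rec (ht : G.IsTree) {s t v : V} (hv : v ≠ s) (hvt : v ≠ t) (φ ψ : V → ℂ) :
    gmap G ht s t φ ψ v =
      haveI : Nonempty V := ⟨s⟩
      Classical.epsilon (fun c =>
        par G ht s c = gmap G ht s t φ ψ (par G ht s v) ∧
        G.dist s c = G.dist s (par G ht s v) + 1 ∧ φ c = ψ v) := by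
  conv_lhs => rw [gmap.eq_def]
  rw [dif_neg hv, if_neg hvt]

lemma ne_s_of_dist_pos (ht : G.IsTree) {s v : V} (h : G.dist s v ≠ 0) : v ≠ s := by
  rintro rfl
  rw [SimpleGraph.dist_self] at h
  exact h rfl

/-- The main invariant satisfied by `gmap`. -/
lemma gmap_spec [G.LocallyFinite] (ht : G.IsTree) {s t : V} (hst : G.Adj s t)
    (hdeg : ∀ v : V, G.degree v = 3) {α β : ℂ} (hαβ : α ≠ β) {φ ψ : V → ℂ}
    (hφ : G.IsHolomorphic φ) (hφs : φ s = α) (hφt : φ t = β)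
    (hψ : G.IsHolomorphic ψ) (hψs : ψ s = α) (hψt : ψ t = β) (v : V) :
    φ (gmap G ht s t φ ψ v) = ψ v ∧
    G.dist s (gmap G ht s t φ ψ v) = G.dist s v ∧
    (v ≠ s → par G ht s (gmap G ht s t φ ψ v) = gmap G ht s t φ ψ (par G ht s v)) := by
  have main : ∀ (n : ℕ) (v : V), G.dist s v ≤ n →
      φ (gmap G ht s t φ ψ v) = ψ v ∧
      G.dist s (gmap G ht s t φ ψ v) = G.dist s v ∧
      (v ≠ s → par G ht s (gmap G ht s t φ ψ v) = gmap G ht s t φ ψ (par G ht s v)) := by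
    intro n
    induction n with
    | zero =>
        intro v hv
        have hvs : v = s := eq_s_of_dist_eq_zero ht (by omega)
        subst hvs
        rw [gmap_s]
        exact ⟨hφs.trans hψs.symm, rfl, fun h => absurd rfl h⟩
    | succ n IH =>
        intro v hv
        by_cases hvs : v = s
        · subst hvs
          rw [gmap_s]
          exact ⟨hφs.trans hψs.symm, rfl, fun h => absurd rfl h⟩
        by_cases hvt : v = t
        · subst hvt
          rw [gmap_t ht hst.ne']
          refine ⟨hφt.trans hψt.symm, rfl, fun _ => ?_⟩
          rw [par_t ht hst, gmap_s]
        · -- main case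
          have hdv := par_dist ht hvs
          have hdp : G.dist s (par G ht s v) ≤ n := by omega
          obtain ⟨IH1, IH2, IH3⟩ := IH (par G ht s v) hdp
          -- the difference at `gmap (par v)` agrees with the difference at `par v`
          have hqval : φ (pq G ht s t (gmap G ht s t φ ψ (par G ht s v))) =
              ψ (pq G ht s t (par G ht s v)) := by
            by_cases hps : par G ht s v = s
            · rw [hps, gmap_s, pq_s, hφt, hψt]
            · have hgps : gmap G ht s t φ ψ (par G ht s v) ≠ s := by
                apply ne_s_of_dist_pos ht
                rw [IH2]
                have := dist_pos ht hps
                omega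
              rw [pq_of_ne ht t hgps, pq_of_ne ht t hps, IH3 hps]
              have hdpp := par_dist ht hps
              exact (IH (par G ht s (par G ht s v)) (by omega)).1
          -- witness for the epsilon predicate
          have hex : ∃ c, par G ht s c = gmap G ht s t φ ψ (par G ht s v) ∧
              G.dist s c = G.dist s (par G ht s v) + 1 ∧ φ c = ψ v := by
            obtain ⟨a', b', hab', hqab', heq', hNx', hfa', hfb'⟩ :=
              holo_struct ht hst hdeg hφ (gmap G ht s t φ ψ (par G ht s v))
            obtain ⟨a, b, hab, hqab, heq, hNx, hfa, hfb⟩ :=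
              holo_struct ht hst hdeg hψ (par G ht s v)
            have hvmem : v ∈ ({a, b} : Finset V) := by
              rw [← heq]
              exact mem_children ht hst hvs hvt
            have ha'c := child_facts ht hst
              (x := gmap G ht s t φ ψ (par G ht s v)) (c := a') (by rw [heq']; simp)
            have hb'c := child_facts ht hst
              (x := gmap G ht s t φ ψ (par G ht s v)) (c := b') (by rw [heq']; simp)
            rcases Finset.mem_insert.mp hvmem with h | h
            · refine ⟨a', ha'c.1, by rw [ha'c.2.1, IH2], ?_⟩
              rw [← h] at hfa
              rw [hfa', IH1, hqval, hfa]
            · rw [Finset.mem_singleton] at h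
              refine ⟨b', hb'c.1, by rw [hb'c.2.1, IH2], ?_⟩
              rw [← h] at hfb
              rw [hfb', IH1, hqval, hfb]
          have hspec : par G ht s (gmap G ht s t φ ψ v) = gmap G ht s t φ ψ (par G ht s v) ∧
              G.dist s (gmap G ht s t φ ψ v) = G.dist s (par G ht s v) + 1 ∧
              φ (gmap G ht s t φ ψ v) = ψ v := by
            rw [gmap_rec ht hvs hvt φ ψ]
            exact Classical.epsilon_spec (p := fun c =>
              par G ht s c = gmap G ht s t φ ψ (par G ht s v) ∧
              G.dist s c = G.dist s (par G ht s v) + 1 ∧ φ c = ψ v) hex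
          obtain ⟨h1, h2, h3⟩ := hspec
          exact ⟨h3, by omega, fun _ => h1⟩
  exact main (G.dist s v) v le_rfl

/-- Uniqueness of the element specified by the defining predicate of `gmap`. -/
lemma pred_unique [G.LocallyFinite] (ht : G.IsTree) {s t : V} (hst : G.Adj s t)
    (hdeg : ∀ v : V, G.degree v = 3) {φ : V → ℂ}
    (hφ : G.IsHolomorphic φ) (hφst : φ s ≠ φ t) {c c' : V}
    (h1 : par G ht s c = par G ht s c') (hd : G.dist s c = G.dist s c')
    (hd0 : G.dist s c ≠ 0) (h3 : φ c = φ c') : c = c' := by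
  have hcs : c ≠ s := ne_s_of_dist_pos ht hd0
  have hcs' : c' ≠ s := ne_s_of_dist_pos ht (by omega)
  have hadj : G.Adj (par G ht s c) c := par_adj ht hcs
  have hadj' : G.Adj (par G ht s c) c' := h1 ▸ par_adj ht hcs'
  exact holo_inj ht hst hdeg hφ hφst (x := par G ht s c)
    ((mem_neighborFinset _ _ _).mpr hadj) ((mem_neighborFinset _ _ _).mpr hadj') h3

lemma gmap_left_inv [G.LocallyFinite] (ht : G.IsTree) {s t : V} (hst : G.Adj s t)
    (hdeg : ∀ v : V, G.degree v = 3) {α β : ℂ} (hαβ : α ≠ β) {φ ψ : V → ℂ}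
    (hφ : G.IsHolomorphic φ) (hφs : φ s = α) (hφt : φ t = β)
    (hψ : G.IsHolomorphic ψ) (hψs : ψ s = α) (hψt : ψ t = β) (v : V) :
    gmap G ht s t ψ φ (gmap G ht s t φ ψ v) = v := by
  have hψst : ψ s ≠ ψ t := by rw [hψs, hψt]; exact hαβ
  have main : ∀ (n : ℕ) (v : V), G.dist s v ≤ n →
      gmap G ht s t ψ φ (gmap G ht s t φ ψ v) = v := by
    intro n
    induction n with
    | zero =>
        intro v hv
        have hvs : v = s := eq_s_of_dist_eq_zero ht (by omega)
        subst hvs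
        rw [gmap_s, gmap_s]
    | succ n IH =>
        intro v hv
        by_cases hvs : v = s
        · subst hvs; rw [gmap_s, gmap_s]
        by_cases hvt : v = t
        · subst hvt; rw [gmap_t ht hst.ne', gmap_t ht hst.ne']
        · obtain ⟨S1, S2, S3⟩ :=
            gmap_spec ht hst hdeg hαβ hφ hφs hφt hψ hψs hψt v
          have hdv0 : G.dist s v ≠ 0 := by
            have := dist_pos ht hvs
            omega
          have hws : gmap G ht s t φ ψ v ≠ s := ne_s_of_dist_pos ht (by omega)
          have hwt : gmap G ht s t φ ψ v ≠ t := by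
            intro hwt
            have hd1 : G.dist s v = 1 := by
              rw [← S2, hwt]
              exact SimpleGraph.dist_eq_one_iff_adj.mpr hst
            have hpv : par G ht s v = s := by
              apply eq_s_of_dist_eq_zero ht
              have := par_dist ht hvs
              omega
            have hadjv : G.Adj s v := by
              have := par_adj ht hvs
              rwa [hpv] at this
            have hval : ψ v = ψ t := by
              rw [hψt, ← hφt, ← hwt, S1]
            exact hvt (holo_inj ht hst hdeg hψ hψst
              ((mem_neighborFinset _ _ _).mpr hadjv)
              ((mem_neighborFinset _ _ _).mpr hst) hval)
          obtain ⟨T1, T2, T3⟩ :=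
            gmap_spec ht hst hdeg hαβ hψ hψs hψt hφ hφs hφt (gmap G ht s t φ ψ v)
          have hdpar := par_dist ht hvs
          have hIHp : gmap G ht s t ψ φ (gmap G ht s t φ ψ (par G ht s v)) = par G ht s v :=
            IH (par G ht s v) (by omega)
          apply pred_unique ht hst hdeg hψ hψst
            (c := gmap G ht s t ψ φ (gmap G ht s t φ ψ v)) (c' := v)
          · rw [T3 hws, S3 hvs, hIHp]
          · rw [T2, S2]
          · rw [T2, S2]; exact hdv0
          · rw [T1, S1]
  exact main (G.dist s v) v le_rfl

lemma gmap_adj [G.LocallyFinite] (ht : G.IsTree) {s t : V} (hst : G.Adj s t)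
    (hdeg : ∀ v : V, G.degree v = 3) {α β : ℂ} (hαβ : α ≠ β) {φ ψ : V → ℂ}
    (hφ : G.IsHolomorphic φ) (hφs : φ s = α) (hφt : φ t = β)
    (hψ : G.IsHolomorphic ψ) (hψs : ψ s = α) (hψt : ψ t = β) {u v : V}
    (h : G.Adj u v) : G.Adj (gmap G ht s t φ ψ u) (gmap G ht s t φ ψ v) := by
  have key : ∀ u v : V, G.Adj u v → G.dist s u + 1 = G.dist s v →
      G.Adj (gmap G ht s t φ ψ u) (gmap G ht s t φ ψ v) := by
    intro u v h hd
    have hvs : v ≠ s := ne_s_of_dist_pos ht (by omega)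
    have hpv : par G ht s v = u := par_eq ht h (by omega)
    obtain ⟨S1, S2, S3⟩ := gmap_spec ht hst hdeg hαβ hφ hφs hφt hψ hψs hψt v
    have hgvs : gmap G ht s t φ ψ v ≠ s := ne_s_of_dist_pos ht (by omega)
    have := par_adj ht hgvs
    rwa [S3 hvs, hpv] at this
  rcases adj_dist ht (s := s) h with hd | hd
  · exact key u v h hd
  · exact (key v u h.symm hd).symm

lemma iso_dist (ht : G.IsTree) (e : G ≃g G) (u v : V) :
    G.dist (e u) (e v) = G.dist u v := by
  have key : ∀ (e : G ≃g G) (u v : V), G.dist (e u) (e v) ≤ G.dist u v := by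
    intro e u v
    obtain ⟨w, hw⟩ := ht.isConnected.exists_walk_length_eq_dist u v
    calc G.dist (e u) (e v) ≤ (w.map e.toHom).length := SimpleGraph.dist_le _
    _ = w.length := Walk.length_map _ _
    _ = G.dist u v := hw
  refine le_antisymm (key e u v) ?_
  have := key e.symm (e u) (e v)
  simpa using this

lemma gmap_unique [G.LocallyFinite] (ht : G.IsTree) {s t : V} (hst : G.Adj s t)
    (hdeg : ∀ v : V, G.degree v = 3) {α β : ℂ} (hαβ : α ≠ β) {φ ψ : V → ℂ}
    (hφ : G.IsHolomorphic φ) (hφs : φ s = α) (hφt : φ t = β)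
    (hψ : G.IsHolomorphic ψ) (hψs : ψ s = α) (hψt : ψ t = β)
    (e : G ≃g G) (hes : e s = s) (het : e t = t) (hcomp : ψ = φ ∘ e) (v : V) :
    e v = gmap G ht s t φ ψ v := by
  have hφst : φ s ≠ φ t := by rw [hφs, hφt]; exact hαβ
  have hedist : ∀ w : V, G.dist s (e w) = G.dist s w := by
    intro w
    conv_lhs => rw [← hes]
    exact iso_dist ht e s w
  have main : ∀ (n : ℕ) (v : V), G.dist s v ≤ n → e v = gmap G ht s t φ ψ v := by
    intro n
    induction n with
    | zero =>
        intro v hv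
        have hvs : v = s := eq_s_of_dist_eq_zero ht (by omega)
        subst hvs
        rw [gmap_s, hes]
    | succ n IH =>
        intro v hv
        by_cases hvs : v = s
        · subst hvs; rw [gmap_s, hes]
        by_cases hvt : v = t
        · subst hvt; rw [gmap_t ht hst.ne', het]
        · have hdpar := par_dist ht hvs
          obtain ⟨S1, S2, S3⟩ := gmap_spec ht hst hdeg hαβ hφ hφs hφt hψ hψs hψt v
          have hadj : G.Adj (e (par G ht s v)) (e v) :=
            e.map_rel_iff.mpr (par_adj ht hvs)
          have hpev : par G ht s (e v) = e (par G ht s v) := by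
            apply par_eq ht hadj
            rw [hedist, hedist]
            omega
          have hvs' : e v ≠ s := ne_s_of_dist_pos ht (by rw [hedist]; omega)
          apply pred_unique ht hst hdeg hφ hφst (c := e v)
            (c' := gmap G ht s t φ ψ v)
          · rw [hpev, S3 hvs, IH (par G ht s v) (by omega)]
          · rw [hedist, S2]
          · rw [hedist]; omega
          · rw [S1]
            exact (congrFun hcomp v).symm
  exact main (G.dist s v) v le_rfl

lemma harmonic_comp [G.LocallyFinite] {f : V → ℂ} (hf : G.IsHarmonic f) (e : G ≃g G) :
    G.IsHarmonic (f ∘ e) := by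
  intro x
  have hsum : ∑ y ∈ G.neighborFinset x, (f (e y) - f (e x)) =
      ∑ z ∈ G.neighborFinset (e x), (f z - f (e x)) := by
    refine Finset.sum_nbij' (fun y => e y) (fun z => e.symm z) ?_ ?_ ?_ ?_ ?_
    · intro y hy
      rw [mem_neighborFinset] at hy ⊢
      exact e.map_rel_iff.mpr hy
    · intro z hz
      rw [mem_neighborFinset] at hz ⊢
      rw [← e.map_rel_iff]
      simpa using hz
    · intro y _; simp
    · intro z _; simp
    · intro y _; rfl
  exact hsum.trans (hf (e x))

end Stmt12

/-- on a tree in which every vertex has degree 3, for adjacent vertices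
`s ~ t` and `α ≠ β` in `ℂ`, the graph automorphisms fixing `s` and `t` act (via
`φ ↦ φ ∘ g`) simply transitively on the nonempty set of ℂ-valued holomorphic functions
`φ` with `φ s = α` and `φ t = β`. -/
theorem aut_fixing_edge_acts_simply_transitively_on_holomorphic
    {V : Type*} (G : SimpleGraph V) [G.LocallyFinite]
    (htree : G.IsTree) (hdeg : ∀ v : V, G.degree v = 3)
    (s t : V) (hst : G.Adj s t) (α β : ℂ) (hαβ : α ≠ β) :
    (∃ φ : V → ℂ, G.IsHolomorphic φ ∧ φ s = α ∧ φ t = β) ∧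
    (∀ φ : V → ℂ, (G.IsHolomorphic φ ∧ φ s = α ∧ φ t = β) →
      ∀ g : G ≃g G, g s = s → g t = t →
        (G.IsHolomorphic (φ ∘ g) ∧ (φ ∘ g) s = α ∧ (φ ∘ g) t = β)) ∧
    (∀ φ ψ : V → ℂ, (G.IsHolomorphic φ ∧ φ s = α ∧ φ t = β) →
      (G.IsHolomorphic ψ ∧ ψ s = α ∧ ψ t = β) →
        ∃! g : G ≃g G, (g s = s ∧ g t = t) ∧ ψ = φ ∘ g) := by
  classical
  refine ⟨?_, ?_, ?_⟩
  · exact ⟨Stmt12.phi G htree s t α β, Stmt12.phi_isHolomorphic htree hst hdeg α β,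
      Stmt12.phi_s htree s t α β, Stmt12.phi_t htree hst.ne' α β⟩
  · rintro φ ⟨hφ, hφs, hφt⟩ g hgs hgt
    refine ⟨⟨Stmt12.harmonic_comp hφ.1 g, ?_⟩, ?_, ?_⟩
    · exact Stmt12.harmonic_comp (f := fun z => φ z ^ 2) hφ.2 g
    · show φ (g s) = α
      rw [hgs]; exact hφs
    · show φ (g t) = β
      rw [hgt]; exact hφt
  · rintro φ ψ ⟨hφ, hφs, hφt⟩ ⟨hψ, hψs, hψt⟩
    refine ⟨⟨⟨Stmt12.gmap G htree s t φ ψ, Stmt12.gmap G htree s t ψ φ,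
        Stmt12.gmap_left_inv htree hst hdeg hαβ hφ hφs hφt hψ hψs hψt,
        Stmt12.gmap_left_inv htree hst hdeg hαβ hψ hψs hψt hφ hφs hφt⟩, ?_⟩,
      ⟨⟨?_, ?_⟩, ?_⟩, ?_⟩
    · intro a b
      show G.Adj (Stmt12.gmap G htree s t φ ψ a) (Stmt12.gmap G htree s t φ ψ b) ↔ G.Adj a b
      constructor
      · intro h
        have h2 := Stmt12.gmap_adj htree hst hdeg hαβ hψ hψs hψt hφ hφs hφt h
        rwa [Stmt12.gmap_left_inv htree hst hdeg hαβ hφ hφs hφt hψ hψs hψt,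
          Stmt12.gmap_left_inv htree hst hdeg hαβ hφ hφs hφt hψ hψs hψt] at h2
      · exact Stmt12.gmap_adj htree hst hdeg hαβ hφ hφs hφt hψ hψs hψt
    · exact Stmt12.gmap_s htree s t φ ψ
    · exact Stmt12.gmap_t htree hst.ne' φ ψ
    · funext v
      exact (Stmt12.gmap_spec htree hst hdeg hαβ hφ hφs hφt hψ hψs hψt v).1.symm
    · rintro e ⟨⟨hes, het⟩, hcomp⟩
      have hpt : ∀ v, e v = Stmt12.gmap G htree s t φ ψ v :=
        Stmt12.gmap_unique htree hst hdeg hαβ hφ hφs hφt hψ hψs hψt e hes het hcomp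
      exact RelIso.ext hpt
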